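/- With the notation of the previous statement (L₀₀, L₁₁ graph Laplacians, L₁ the block matrix), the second-smallest eigenvalue of L₁ is at most n·p∅; i.e., λ_{n−1}(L₁) ≤ n·p∅. -/

import Mathlib

open Matrix in
/-- If `v` is an eigenvector of a real Hermitian matrix `A` with eigenvalue `μ`, then `v` is
orthogonal to every eigenbasis vector whose eigenvalue differs from `μ`. -/
lemma aux_eig_coeff_zero {K : Type*} [Fintype K] [DecidableEq K] {A : Matrix K K ℝ}
    (hA : A.IsHermitian) {v : K → ℝ} {μ : ℝ} (hv : A *ᵥ v = μ • v) {i : K}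
    (hi : hA.eigenvalues i ≠ μ) : ⇑(hA.eigenvectorBasis i) ⬝ᵥ v = 0 := by
  have hsym : Aᵀ = A := by
    ext a b
    conv_rhs => rw [← hA]
    simp
  have h1 : ⇑(hA.eigenvectorBasis i) ⬝ᵥ (A *ᵥ v)
      = hA.eigenvalues i * (⇑(hA.eigenvectorBasis i) ⬝ᵥ v) := by
    rw [Matrix.dotProduct_mulVec, ← Matrix.mulVec_transpose, hsym,
      hA.mulVec_eigenvectorBasis, smul_dotProduct]
    simp
  rw [hv, dotProduct_smul, smul_eq_mul] at h1
  by_contra hd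
  exact hi (mul_right_cancel₀ hd h1.symm)

open Matrix in
/-- A vector orthogonal to all eigenbasis vectors except the `i0`-th is a multiple of the
`i0`-th eigenbasis vector. -/
lemma aux_rep_single {K : Type*} [Fintype K] [DecidableEq K] {A : Matrix K K ℝ}
    (hA : A.IsHermitian) (v : K → ℝ) (i0 : K)
    (h0 : ∀ i, i ≠ i0 → ⇑(hA.eigenvectorBasis i) ⬝ᵥ v = 0) :
    v = (⇑(hA.eigenvectorBasis i0) ⬝ᵥ v) • ⇑(hA.eigenvectorBasis i0) := by
  set e := hA.eigenvectorBasis with he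
  let V : EuclideanSpace ℝ K := WithLp.toLp 2 v
  have hco : ∀ i, e.repr V i = ⇑(e i) ⬝ᵥ v := by
    intro i
    rw [e.repr_apply_apply]
    simp [PiLp.inner_apply, RCLike.inner_apply, dotProduct, V, mul_comm]
  have h := e.sum_repr V
  rw [Finset.sum_eq_single i0 (fun i _ hi => by rw [hco i, h0 i hi, zero_smul])
    (fun h => absurd (Finset.mem_univ i0) h)] at h
  rw [hco] at h
  exact congrArg WithLp.ofLp h.symm

open Matrix

/-- With `L₀₀`, `L₁₁` graph Laplacians and `L₁` the block matrix
`[[L₀₀ + n₁p∅·I, −p∅·J], [−p∅·J, L₁₁ + n₀p∅·I]]`, the second-smallest eigenvalue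
of `L₁` is at most `n·p∅`. Eigenvalues are listed in nondecreasing order via a
sorting bijection `σ`. -/
theorem block_laplacian_second_eigenvalue_le (n₀ n₁ : ℕ) (hn₀ : 0 < n₀) (hn₁ : 0 < n₁)
    (p : ℝ) (hp : 0 ≤ p)
    (L₀₀ : Matrix (Fin n₀) (Fin n₀) ℝ) (L₁₁ : Matrix (Fin n₁) (Fin n₁) ℝ)
    (h₀₀ : L₀₀.PosSemidef) (h₁₁ : L₁₁.PosSemidef)
    (h₀₀one : L₀₀.mulVec (fun _ => (1 : ℝ)) = 0)
    (h₁₁one : L₁₁.mulVec (fun _ => (1 : ℝ)) = 0)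
    (L₁ : Matrix (Fin n₀ ⊕ Fin n₁) (Fin n₀ ⊕ Fin n₁) ℝ)
    (hL₁ : L₁ = Matrix.fromBlocks
      (L₀₀ + ((n₁ : ℝ) * p) • (1 : Matrix (Fin n₀) (Fin n₀) ℝ))
      (-(Matrix.of fun _ _ => p))
      (-(Matrix.of fun _ _ => p))
      (L₁₁ + ((n₀ : ℝ) * p) • (1 : Matrix (Fin n₁) (Fin n₁) ℝ)))
    (hherm : L₁.IsHermitian)
    (σ : Fin (n₀ + n₁) ≃ (Fin n₀ ⊕ Fin n₁))
    (hσ : Monotone (hherm.eigenvalues ∘ σ)) :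
    hherm.eigenvalues (σ ⟨1, by omega⟩) ≤ ((n₀ + n₁ : ℕ) : ℝ) * p := by
  classical
  by_contra hcon
  push_neg at hcon
  set i0 : Fin n₀ ⊕ Fin n₁ := σ ⟨0, by omega⟩ with hi0
  have hnp : (0:ℝ) ≤ ((n₀ + n₁ : ℕ) : ℝ) * p := mul_nonneg (Nat.cast_nonneg _) hp
  -- every eigenvalue other than the one at index `i0` exceeds `n·p`
  have hkey : ∀ i, i ≠ i0 → ((n₀ + n₁ : ℕ) : ℝ) * p < hherm.eigenvalues i := by
    intro i hi
    have h1 : (σ.symm i) ≠ ⟨0, by omega⟩ := by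
      intro h
      exact hi (by rw [← Equiv.apply_symm_apply σ i, h])
    have hval : (σ.symm i).1 ≠ 0 := fun h => h1 (Fin.ext h)
    have h2 : (⟨1, by omega⟩ : Fin (n₀ + n₁)) ≤ σ.symm i :=
      Fin.mk_le_of_le_val (by omega)
    have h3 := hσ h2
    simp only [Function.comp_apply, Equiv.apply_symm_apply] at h3
    exact lt_of_lt_of_le hcon h3
  -- the two eigenvectors
  set w₁ : Fin n₀ ⊕ Fin n₁ → ℝ := Sum.elim (fun _ => (1:ℝ)) (fun _ => (1:ℝ)) with hw₁def
  set w₂ : Fin n₀ ⊕ Fin n₁ → ℝ :=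
    Sum.elim (fun _ => ((n₁:ℕ):ℝ)) (fun _ => -((n₀:ℕ):ℝ)) with hw₂def
  have hw₁ : L₁ *ᵥ w₁ = (0:ℝ) • w₁ := by
    rw [hL₁, hw₁def, Matrix.fromBlocks_mulVec]
    funext x
    cases x with
    | inl a =>
      have := congrFun h₀₀one a
      simp only [Matrix.mulVec, dotProduct, Pi.zero_apply, mul_one] at this
      simp [Matrix.mulVec, dotProduct, Matrix.add_apply, Matrix.smul_apply,
        Matrix.one_apply, Finset.sum_add_distrib, this, Finset.mul_sum, mul_ite,
        Finset.sum_ite_eq']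
    | inr a =>
      have := congrFun h₁₁one a
      simp only [Matrix.mulVec, dotProduct, Pi.zero_apply, mul_one] at this
      simp [Matrix.mulVec, dotProduct, Matrix.add_apply, Matrix.smul_apply,
        Matrix.one_apply, Finset.sum_add_distrib, this, Finset.mul_sum, mul_ite,
        Finset.sum_ite_eq']
  have hw₂ : L₁ *ᵥ w₂ = (((n₀ + n₁ : ℕ) : ℝ) * p) • w₂ := by
    rw [hL₁, hw₂def, Matrix.fromBlocks_mulVec]
    funext x
    cases x with
    | inl a =>
      have := congrFun h₀₀one a
      simp only [Matrix.mulVec, dotProduct, Pi.zero_apply, mul_one] at this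
      simp [Matrix.mulVec, dotProduct, Matrix.add_apply, Matrix.smul_apply,
        Matrix.one_apply, Finset.sum_add_distrib, ← Finset.sum_mul, this, mul_ite,
        Finset.sum_ite_eq']
      ring
    | inr a =>
      have := congrFun h₁₁one a
      simp only [Matrix.mulVec, dotProduct, Pi.zero_apply, mul_one] at this
      simp [Matrix.mulVec, dotProduct, Matrix.add_apply, Matrix.smul_apply,
        Matrix.one_apply, Finset.sum_add_distrib, ← Finset.sum_mul, this, mul_ite,
        Finset.sum_ite_eq']
      ring
  -- both eigenvectors are multiples of the `i0`-th eigenbasis vector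
  have hc₁ : ∀ i, i ≠ i0 → ⇑(hherm.eigenvectorBasis i) ⬝ᵥ w₁ = 0 := fun i hi =>
    aux_eig_coeff_zero hherm hw₁ (ne_of_gt (lt_of_le_of_lt hnp (hkey i hi)))
  have hc₂ : ∀ i, i ≠ i0 → ⇑(hherm.eigenvectorBasis i) ⬝ᵥ w₂ = 0 := fun i hi =>
    aux_eig_coeff_zero hherm hw₂ (ne_of_gt (hkey i hi))
  have hrep₁ := aux_rep_single hherm w₁ i0 hc₁
  have hrep₂ := aux_rep_single hherm w₂ i0 hc₂
  set u : (Fin n₀ ⊕ Fin n₁) → ℝ := ⇑(hherm.eigenvectorBasis i0) with hu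
  set E : ℝ := u ⬝ᵥ u with hE
  set c₁ : ℝ := u ⬝ᵥ w₁ with hc₁'
  set c₂ : ℝ := u ⬝ᵥ w₂ with hc₂'
  -- direct computation of the three dot products
  have h12 : w₁ ⬝ᵥ w₂ = 0 := by
    simp [hw₁def, hw₂def, dotProduct, Fintype.sum_sum_type]
    ring
  have h11 : w₁ ⬝ᵥ w₁ = ((n₀ + n₁ : ℕ) : ℝ) := by
    simp [hw₁def, dotProduct, Fintype.sum_sum_type]
  have h22 : w₂ ⬝ᵥ w₂ = (n₀:ℝ) * (n₁:ℝ)^2 + (n₁:ℝ) * (n₀:ℝ)^2 := by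
    simp [hw₂def, dotProduct, Fintype.sum_sum_type]
    ring
  rw [hrep₁] at h11
  rw [hrep₂] at h22
  rw [hrep₁, hrep₂] at h12
  simp only [smul_dotProduct, dotProduct_smul, smul_eq_mul] at h12 h11 h22
  -- contradiction
  have hpos : (0:ℝ) < ((n₀ + n₁ : ℕ) : ℝ) * ((n₀:ℝ) * (n₁:ℝ)^2 + (n₁:ℝ) * (n₀:ℝ)^2) := by
    have h0 : (0:ℝ) < (n₀:ℝ) := by exact_mod_cast hn₀
    have h1 : (0:ℝ) < (n₁:ℝ) := by exact_mod_cast hn₁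
    have : (0:ℝ) < ((n₀ + n₁ : ℕ) : ℝ) := by positivity
    positivity
  have hEq : (c₁ * (c₁ * (u ⬝ᵥ u))) * (c₂ * (c₂ * (u ⬝ᵥ u)))
      = (c₂ * (c₁ * (u ⬝ᵥ u))) * (c₂ * (c₁ * (u ⬝ᵥ u))) := by ring
  rw [h11, h22, h12, mul_zero] at hEq
  exact absurd hEq (ne_of_gt hpos)
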